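/- Let K ⊆ ℝ² be a region transverse to the verticals (every nonempty intersection with a vertical line is connected), triangulated by finitely many affine 2-simplices. Let f : K → ℝ² be a simplexwise-linear map that is vertical (each vertex (x,y) is sent to a point (x, y') with the same first coordinate). If the signed area of f(τ) is strictly positive for every 2-simplex τ of K, then f is injective. -/

import Mathlib

/-- Vertex set of an ordered triangle. -/
def vset {ι : Type} [DecidableEq ι] (t : ι × ι × ι) : Finset ι := {t.1, t.2.1, t.2.2}

/-- The geometric (closed, filled) triangle spanned by an ordered triple of vertices. -/
def triSet {ι : Type} (pos : ι → ℝ × ℝ) (t : ι × ι × ι) : Set (ℝ × ℝ) :=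
  convexHull ℝ {pos t.1, pos t.2.1, pos t.2.2}

/-- Twice the signed area of the ordered triangle `p q r`. -/
def ori (p q r : ℝ × ℝ) : ℝ :=
  (q.1 - p.1) * (r.2 - p.2) - (r.1 - p.1) * (q.2 - p.2)

/-- A region of the plane triangulated by finitely many affine 2-simplices. -/
structure TriRegion (ι : Type) [Fintype ι] [DecidableEq ι] where
  pos : ι → ℝ × ℝ
  inj : Function.Injective pos
  tris : Finset (ι × ι × ι)
  nonempty : tris.Nonempty
  indep : ∀ t ∈ tris, AffineIndependent ℝ ![pos t.1, pos t.2.1, pos t.2.2]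
  glue : ∀ s ∈ tris, ∀ t ∈ tris,
    triSet pos s ∩ triSet pos t = convexHull ℝ (pos '' ((vset s ∩ vset t : Finset ι) : Set ι))

namespace TriRegion

variable {ι : Type} [Fintype ι] [DecidableEq ι]

/-- The underlying space. -/
def space (D : TriRegion ι) : Set (ℝ × ℝ) := ⋃ t ∈ D.tris, triSet D.pos t

/-- Transverse to the verticals. -/
def TrV (D : TriRegion ι) : Prop :=
  ∀ c : ℝ, IsPreconnected (D.space ∩ {p : ℝ × ℝ | p.1 = c})

/-- Simplexwise linear on the region. -/
def SLOn (D : TriRegion ι) (F : ℝ × ℝ → ℝ × ℝ) : Prop :=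
  ∀ t ∈ D.tris, ∃ g : (ℝ × ℝ) →ᵃ[ℝ] (ℝ × ℝ), Set.EqOn F g (triSet D.pos t)

end TriRegion

lemma affine_diff (g : (ℝ×ℝ) →ᵃ[ℝ] (ℝ×ℝ)) (p q : ℝ×ℝ) :
    g p - g q = (p.1-q.1) • g.linear (1,0) + (p.2-q.2) • g.linear (0,1) := by
  have h1 : g p - g q = g.linear (p - q) := by
    rw [← vsub_eq_sub, ← vsub_eq_sub, g.linearMap_vsub]
  have h2 : p - q = (p.1-q.1) • ((1:ℝ),(0:ℝ)) + (p.2-q.2) • ((0:ℝ),(1:ℝ)) := by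
    simp [Prod.ext_iff]
  rw [h1, h2, map_add, map_smul, map_smul]

lemma linear_snd_pos (g : (ℝ×ℝ) →ᵃ[ℝ] (ℝ×ℝ)) (v1 v2 v3 : ℝ×ℝ)
    (h1 : (g v1).1 = v1.1) (h2 : (g v2).1 = v2.1) (h3 : (g v3).1 = v3.1)
    (ho : 0 < ori v1 v2 v3) (hp : 0 < ori (g v1) (g v2) (g v3)) :
    0 < (g.linear (0,1)).2 := by
  have A2 := congrArg Prod.snd (affine_diff g v2 v1)
  have A3 := congrArg Prod.snd (affine_diff g v3 v1)
  simp only [Prod.snd_add, Prod.snd_sub, Prod.smul_snd, smul_eq_mul] at A2 A3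
  have key : ori (g v1) (g v2) (g v3) = (g.linear (0,1)).2 * ori v1 v2 v3 := by
    unfold ori
    rw [h1, h2, h3]
    linear_combination (v2.1 - v1.1) * A3 - (v3.1 - v1.1) * A2
  nlinarith [key, ho, hp]

lemma strictMonoOn_of_cover {α : Type*} [DecidableEq α] (T : Finset α) (piece : α → Set ℝ)
    {s : Set ℝ} (hs : s.OrdConnected)
    (hcover : s ⊆ ⋃ t ∈ T, piece t)
    (hclosed : ∀ t ∈ T, IsClosed (piece t))
    (hoc : ∀ t ∈ T, (piece t).OrdConnected)
    (h : ℝ → ℝ)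
    (hmono : ∀ t ∈ T, StrictMonoOn h (piece t)) :
    StrictMonoOn h s := by
  intro a ha b hb hab
  have hIcc : Set.Icc a b ⊆ s := hs.out ha hb
  classical
  have hloc : ∀ x ∈ Set.Icc a b, ∃ ε > (0:ℝ), ∀ u ∈ s, ∀ v ∈ s,
      u ∈ Metric.ball x ε → v ∈ Metric.ball x ε → u < v → h u < h v := by
    intro x hx
    set C : Set ℝ := ⋃ t ∈ T.filter (fun t => x ∉ piece t), piece t with hC
    have hCclosed : IsClosed C := by
      apply Set.Finite.isClosed_biUnion (T.filter (fun t => x ∉ piece t)).finite_toSet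
      intro t ht; exact hclosed t (Finset.mem_filter.mp ht).1
    have hxC : x ∈ Cᶜ := by
      simp only [hC, Set.mem_compl_iff, Set.mem_iUnion]
      rintro ⟨t, ht, hxt⟩
      exact (Finset.mem_filter.mp ht).2 hxt
    obtain ⟨ε, hε, hball⟩ := Metric.isOpen_iff.mp hCclosed.isOpen_compl x hxC
    refine ⟨ε, hε, ?_⟩
    intro u hu v hv hub hvb huv
    have hmem : ∀ w ∈ s, w ∈ Metric.ball x ε → ∃ t ∈ T, x ∈ piece t ∧ w ∈ piece t := by
      intro w hw hwb
      obtain ⟨t, ht, hwt⟩ := Set.mem_iUnion₂.mp (hcover hw)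
      refine ⟨t, ht, ?_, hwt⟩
      by_contra hxt
      have hwC : w ∈ C := Set.mem_biUnion (Finset.mem_filter.mpr ⟨ht, hxt⟩) hwt
      exact (hball hwb) hwC
    obtain ⟨t1, ht1, hxt1, hut1⟩ := hmem u hu hub
    obtain ⟨t2, ht2, hxt2, hvt2⟩ := hmem v hv hvb
    rcases le_or_gt v x with hvx | hxv
    · have hvt1 : v ∈ piece t1 := (hoc t1 ht1).out hut1 hxt1 ⟨le_of_lt huv, hvx⟩
      exact hmono t1 ht1 hut1 hvt1 huv
    · rcases le_or_gt x u with hxu | hux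
      · have hut2 : u ∈ piece t2 := (hoc t2 ht2).out hxt2 hvt2 ⟨hxu, le_of_lt huv⟩
        exact hmono t2 ht2 hut2 hvt2 huv
      · calc h u < h x := hmono t1 ht1 hut1 hxt1 hux
          _ < h v := hmono t2 ht2 hxt2 hvt2 hxv
  choose! ε hε hprop using hloc
  obtain ⟨δ, hδ, hleb⟩ := lebesgue_number_lemma_of_metric (isCompact_Icc (a := a) (b := b))
      (c := fun x : Set.Icc a b => Metric.ball (x : ℝ) (ε x))
      (fun x => Metric.isOpen_ball)
      (fun x hx => Set.mem_iUnion.mpr ⟨⟨x, hx⟩, Metric.mem_ball_self (hε x hx)⟩)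
  have hstep : ∀ u v : ℝ, u ∈ Set.Icc a b → v ∈ Set.Icc a b → u < v → v - u < δ → h u < h v := by
    intro u v hu hv huv hd
    obtain ⟨j, hj⟩ := hleb u hu
    have hub : u ∈ Metric.ball u δ := Metric.mem_ball_self hδ
    have hvb : v ∈ Metric.ball u δ := by
      rw [Metric.mem_ball, Real.dist_eq, abs_lt]
      constructor <;> linarith
    exact hprop j j.2 u (hIcc hu) v (hIcc hv) (hj hub) (hj hvb) huv
  obtain ⟨n, hn⟩ := exists_nat_gt ((b - a)/δ)
  have hba : 0 < b - a := by linarith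
  have hq : 0 < (b - a)/δ := div_pos hba hδ
  have hn0 : (0:ℝ) < n := lt_trans hq hn
  set d : ℝ := (b - a)/n with hd
  have hd0 : 0 < d := div_pos hba hn0
  have hdδ : d < δ := by
    rw [hd, div_lt_iff₀ hn0]
    have := (div_lt_iff₀ hδ).mp hn
    linarith
  have hmemIcc : ∀ i : ℕ, (i : ℝ) ≤ n → a + i * d ∈ Set.Icc a b := by
    intro i hi
    constructor
    · nlinarith
    · have : (i:ℝ) * d ≤ n * d := by nlinarith
      have hnd : (n:ℝ) * d = b - a := by
        rw [hd]; field_simp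
      linarith
  have hchain : ∀ i : ℕ, (i:ℝ) ≤ n → 0 < i → h a < h (a + i * d) := by
    intro i
    induction i with
    | zero => intro _ h0; exact absurd h0 (lt_irrefl 0)
    | succ k ih =>
      intro hk _
      have hk' : (k:ℝ) ≤ n := by push_cast at hk ⊢; linarith
      have hstep' : h (a + k * d) < h (a + (k+1:ℕ) * d) := by
        apply hstep _ _ (hmemIcc k hk') (hmemIcc (k+1) (by exact_mod_cast hk)) _ _
        · push_cast; nlinarith
        · push_cast
          have he : a + ((k:ℝ)+1)*d - (a + k*d) = d := by ring
          linarith [hdδ]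
      rcases Nat.eq_zero_or_pos k with hk0 | hk0
      · subst hk0
        simpa using hstep'
      · exact lt_trans (ih hk' hk0) hstep'
  have hnn : (n:ℝ) ≠ 0 := ne_of_gt hn0
  have hfin : a + n * d = b := by rw [hd]; field_simp; ring
  have := hchain n le_rfl (by exact_mod_cast hn0)
  rwa [hfin] at this

/-- **Lemma 2, injectivity part.** Let `K ⊆ ℝ²` be a finitely
triangulated region transverse to the verticals and `F` a vertical simplexwise
linear map on `K` (preserving first coordinates). If the signed area of `F(τ)` is
strictly positive for every positively oriented 2-simplex `τ` of `K`, then `F` is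
injective on `K`. -/
theorem vertical_SL_positive_areas_injective
    {ι : Type} [Fintype ι] [DecidableEq ι]
    (D : TriRegion ι) (hTrV : D.TrV)
    (F : ℝ × ℝ → ℝ × ℝ)
    (hSL : D.SLOn F)
    (hvert : ∀ p ∈ D.space, (F p).1 = p.1)
    (horient : ∀ t ∈ D.tris, 0 < ori (D.pos t.1) (D.pos t.2.1) (D.pos t.2.2))
    (hpos : ∀ t ∈ D.tris,
      0 < ori (F (D.pos t.1)) (F (D.pos t.2.1)) (F (D.pos t.2.2))) :
    Set.InjOn F D.space := by
  classical
  intro p hp q hq hFeq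
  have hx : q.1 = p.1 := by
    rw [← hvert p hp, ← hvert q hq, hFeq]
  set c := p.1 with hc
  set s : Set ℝ := {y : ℝ | (c, y) ∈ D.space} with hsdef
  set piece : (ι×ι×ι) → Set ℝ := fun t => {y : ℝ | (c, y) ∈ triSet D.pos t} with hpiecedef
  set h : ℝ → ℝ := fun y => (F (c, y)).2 with hhdef
  have hsimg : s = Prod.snd '' (D.space ∩ {r : ℝ×ℝ | r.1 = c}) := by
    ext y
    constructor
    · intro hy; exact ⟨(c,y), ⟨hy, rfl⟩, rfl⟩
    · rintro ⟨⟨x0,y0⟩, ⟨hmem, hx0⟩, rfl⟩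
      have : x0 = c := hx0
      simpa [hsdef, this] using hmem
  have hpre : IsPreconnected s := by
    rw [hsimg]
    exact (hTrV c).image _ continuous_snd.continuousOn
  have hsoc : s.OrdConnected := hpre.ordConnected
  have hsubspace : ∀ t ∈ D.tris, triSet D.pos t ⊆ D.space := by
    intro t ht
    exact Set.subset_biUnion_of_mem ht
  have hcover : s ⊆ ⋃ t ∈ D.tris, piece t := by
    intro y hy
    obtain ⟨t, ht, hmem⟩ := Set.mem_iUnion₂.mp hy
    exact Set.mem_biUnion ht hmem
  have hclosed : ∀ t ∈ D.tris, IsClosed (piece t) := by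
    intro t ht
    have hfin : ({D.pos t.1, D.pos t.2.1, D.pos t.2.2} : Set (ℝ×ℝ)).Finite := by
      apply Set.Finite.insert; apply Set.Finite.insert; exact Set.finite_singleton _
    have hcl : IsClosed (triSet D.pos t) := (hfin.isCompact_convexHull (𝕜 := ℝ)).isClosed
    exact hcl.preimage (continuous_const.prodMk continuous_id)
  have hococ : ∀ t ∈ D.tris, (piece t).OrdConnected := by
    intro t ht
    have hcx : Convex ℝ (triSet D.pos t) := convex_convexHull ℝ _
    have hcp : Convex ℝ (piece t) := by
      intro y1 hy1 y2 hy2 a b ha hb hab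
      have hm := hcx hy1 hy2 ha hb hab
      have heq : a • ((c, y1) : ℝ×ℝ) + b • ((c, y2) : ℝ×ℝ) = (c, a • y1 + b • y2) := by
        have : a*c + b*c = c := by rw [← add_mul, hab, one_mul]
        simp [Prod.ext_iff, smul_eq_mul, this]
      rw [heq] at hm
      exact hm
    exact hcp.ordConnected
  have hmono : ∀ t ∈ D.tris, StrictMonoOn h (piece t) := by
    intro t ht
    obtain ⟨g, hg⟩ := hSL t ht
    have hv1 : D.pos t.1 ∈ triSet D.pos t :=
      subset_convexHull ℝ _ (by simp [Set.mem_insert_iff])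
    have hv2 : D.pos t.2.1 ∈ triSet D.pos t :=
      subset_convexHull ℝ _ (by simp [Set.mem_insert_iff])
    have hv3 : D.pos t.2.2 ∈ triSet D.pos t :=
      subset_convexHull ℝ _ (by simp [Set.mem_insert_iff])
    have hvert1 : (g (D.pos t.1)).1 = (D.pos t.1).1 := by
      rw [← hg hv1]; exact hvert _ (hsubspace t ht hv1)
    have hvert2 : (g (D.pos t.2.1)).1 = (D.pos t.2.1).1 := by
      rw [← hg hv2]; exact hvert _ (hsubspace t ht hv2)
    have hvert3 : (g (D.pos t.2.2)).1 = (D.pos t.2.2).1 := by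
      rw [← hg hv3]; exact hvert _ (hsubspace t ht hv3)
    have hgpos : 0 < ori (g (D.pos t.1)) (g (D.pos t.2.1)) (g (D.pos t.2.2)) := by
      have := hpos t ht
      rwa [hg hv1, hg hv2, hg hv3] at this
    have hb2 : 0 < (g.linear (0,1)).2 :=
      linear_snd_pos g _ _ _ hvert1 hvert2 hvert3 (horient t ht) hgpos
    intro y1 hy1 y2 hy2 hlt
    have e1 : F (c, y1) = g (c, y1) := hg hy1
    have e2 : F (c, y2) = g (c, y2) := hg hy2
    have hdiff := congrArg Prod.snd (affine_diff g (c,y2) (c,y1))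
    simp only [Prod.snd_add, Prod.snd_sub, Prod.smul_snd, smul_eq_mul] at hdiff
    show (F (c, y1)).2 < (F (c, y2)).2
    rw [e1, e2]
    nlinarith [hb2, hdiff, hlt]
  have hsm : StrictMonoOn h s := strictMonoOn_of_cover D.tris piece hsoc hcover hclosed hococ h hmono
  have hpeq : ((c, p.2) : ℝ×ℝ) = p := by rw [hc]
  have hqeq : ((c, q.2) : ℝ×ℝ) = q := Prod.ext hx.symm rfl
  have hps : p.2 ∈ s := by show ((c, p.2) : ℝ×ℝ) ∈ D.space; rw [hpeq]; exact hp
  have hqs : q.2 ∈ s := by show ((c, q.2) : ℝ×ℝ) ∈ D.space; rw [hqeq]; exact hq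
  have hval : h p.2 = h q.2 := by
    show (F (c, p.2)).2 = (F (c, q.2)).2
    rw [hpeq, hqeq, hFeq]
  have h2 : p.2 = q.2 := hsm.injOn hps hqs hval
  exact Prod.ext hx.symm h2
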